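/- The sequence w ↦ ∑_{n=1}^∞ 1/((n − 1/w)(n + 1/w)), indexed by integers w ≥ 2, converges as w → ∞ to ∑_{n=1}^∞ 1/n², and consequently ∑_{n=1}^∞ 1/n² = π²/6. -/

import Mathlib

open Real Filter

lemma zeta2_succ_hasSum : HasSum (fun n : ℕ => 1 / ((n : ℝ) + 1) ^ 2) (π ^ 2 / 6) := by
  have h := hasSum_zeta_two
  have he : (π ^ 2 / 6 : ℝ) = π ^ 2 / 6 + ∑ i ∈ Finset.range 1, 1 / (i : ℝ) ^ 2 := by simp
  rw [he] at h
  have h' := (hasSum_nat_add_iff (f := fun n : ℕ => (1 : ℝ) / (n : ℝ) ^ 2) 1).mpr h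
  simpa using h'

set_option maxHeartbeats 1000000 in
theorem zeta2_via_limit_of_sums :
    Tendsto (fun w : ℕ => ∑' n : ℕ, 1 / ((((n : ℝ) + 1) - 1 / w) * (((n : ℝ) + 1) + 1 / w)))
      atTop (nhds (∑' n : ℕ, 1 / ((n : ℝ) + 1) ^ 2)) ∧
    (∑' n : ℕ, 1 / ((n : ℝ) + 1) ^ 2) = π ^ 2 / 6 := by
  constructor
  · refine tendsto_tsum_of_dominated_convergence
      (f := fun (w : ℕ) (n : ℕ) => 1 / ((((n : ℝ) + 1) - 1 / w) * (((n : ℝ) + 1) + 1 / w)))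
      (g := fun n : ℕ => 1 / ((n : ℝ) + 1) ^ 2)
      (bound := fun n : ℕ => (4 / 3) / ((n : ℝ) + 1) ^ 2) ?_ ?_ ?_
    · have h := zeta2_succ_hasSum.summable.mul_left (4 / 3 : ℝ)
      exact h.congr (fun n => by ring)
    · intro k
      have h1 : Tendsto (fun w : ℕ => (1 : ℝ) / w) atTop (nhds 0) :=
        tendsto_one_div_atTop_nhds_zero_nat
      have h2 : Tendsto (fun w : ℕ => (((k : ℝ) + 1) - 1 / w) * (((k : ℝ) + 1) + 1 / w))
          atTop (nhds (((k : ℝ) + 1) * ((k : ℝ) + 1))) := by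
        simpa using (tendsto_const_nhds.sub h1).mul (tendsto_const_nhds.add h1)
      have hne : ((k : ℝ) + 1) * ((k : ℝ) + 1) ≠ 0 := by positivity
      have h3 := h2.inv₀ hne
      simpa [one_div, pow_two] using h3
    · filter_upwards [eventually_ge_atTop 2] with w hw
      intro k
      have hw' : (2 : ℝ) ≤ (w : ℝ) := by exact_mod_cast hw
      have ht0 : (0 : ℝ) ≤ 1 / w := by positivity
      have ht : (1 : ℝ) / w ≤ 1 / 2 := by
        apply one_div_le_one_div_of_le <;> linarith
      have ha : (1 : ℝ) ≤ (k : ℝ) + 1 := by have := Nat.cast_nonneg (α := ℝ) k; linarith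
      have hpos : 0 < (((k : ℝ) + 1) - 1 / w) * (((k : ℝ) + 1) + 1 / w) := by nlinarith
      rw [Real.norm_eq_abs, abs_of_nonneg (one_div_nonneg.mpr hpos.le)]
      rw [div_le_div_iff₀ hpos (by positivity)]
      nlinarith
  · exact zeta2_succ_hasSum.tsum_eq
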